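/- arXiv:2108.02459 — 2 statements merged into one kernel-verified Lean document; each statement's English description precedes it below -/
import Mathlib

section
/- Let d ≥ 1 and let Z be a closed subset of B̂^1 = [-1/3, 1/3]. If Z contains at least d+1 distinct points, then RG_d(Z) ≥ (d+1)!/2^{d+1}. If Z consists of at most d points, then RG_d(Z) = 0. -/
open scoped RealInnerProductSpace
noncomputable section

/-- Euclidean space ℝ^n. -/
abbrev En (n : ℕ) := EuclideanSpace ℝ (Fin n)

/-- Maximum of absolute values of all partial derivatives of order `l` of `f` at `z`. -/
def partialMax (n l : ℕ) (f : En n → ℝ) (z : En n) : ℝ :=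
  ⨆ α : Fin l → Fin n,
    |iteratedFDeriv ℝ l f z (fun j => EuclideanSpace.single (α j) (1 : ℝ))|

/-- `M_l(f)`: sup over the closed unit ball of the max partial derivative of order `l`. -/
def Ml (n l : ℕ) (f : En n → ℝ) : ℝ :=
  ⨆ z : Metric.closedBall (0 : En n) 1, partialMax n l f (z : En n)

/-- The class `U_d(Z)` of normalized `C^{d+1}` functions vanishing on `Z`. -/
def Ud (n d : ℕ) (Z : Set (En n)) : Set (En n → ℝ) :=
  {f | ContDiff ℝ (d + 1 : ℕ) f ∧ (∀ z ∈ Z, f z = 0) ∧ Ml n 0 f = 1}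

/-- The `d`-rigidity `RG_d(Z)`. -/
def RG (n d : ℕ) (Z : Set (En n)) : ℝ :=
  sInf (Ml n (d + 1) '' Ud n d Z)

/-- `‖d^k ω(t)‖`: max over coordinates of the `k`-th derivative of the curve `ω` at `t`. -/
def curveDer (n k : ℕ) (ω : ℝ → En n) (t : ℝ) : ℝ :=
  ⨆ i : Fin n, |iteratedDeriv k ω t i|

/-- `ν_d(ω,t)`: max over `2 ≤ k ≤ d+1` of `‖d^k ω(t)‖`. -/
def nuAt (n d : ℕ) (ω : ℝ → En n) (t : ℝ) : ℝ :=
  ⨆ k : {k : ℕ // 2 ≤ k ∧ k ≤ d + 1}, curveDer n (k : ℕ) ω t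

/-- `ν_d(ω)`: max over `t ∈ [-1,1]` of `ν_d(ω,t)`. -/
def nuCurve (n d : ℕ) (ω : ℝ → En n) : ℝ :=
  ⨆ t : Set.Icc (-1 : ℝ) 1, nuAt n d ω (t : ℝ)

/-- `M_k(ω)`: max over `t ∈ [-1,1]` of `‖d^k ω(t)‖`. -/
def Mkc (n k : ℕ) (ω : ℝ → En n) : ℝ :=
  ⨆ t : Set.Icc (-1 : ℝ) 1, curveDer n k ω (t : ℝ)

/-- Membership in the family `Ω_d(Z,z₀)` of admissible curves. -/
def InOmega (n d : ℕ) (Z : Set (En n)) (z₀ : En n) (ω : ℝ → En n) : Prop :=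
  ContDiff ℝ (d + 1 : ℕ) ω ∧
  (∀ t ∈ Set.Icc (-1 : ℝ) 1, ω t ∈ Metric.closedBall (0 : En n) 1) ∧
  (∃ t ∈ Set.Icc (-1 : ℝ) 1, ω t = z₀) ∧
  (∃ z : Fin (d + 1) → En n, Function.Injective z ∧
    ∀ j, z j ∈ Z ∧ ∃ t ∈ Set.Icc (-1 : ℝ) 1, ω t = z j) ∧
  (∀ t ∈ Set.Icc (-1 : ℝ) 1, 0 < curveDer n 1 ω t ∧ curveDer n 1 ω t ≤ 1) ∧
  nuCurve n d ω ≤ 1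

/-- Pointwise `d`-thickness `ν_d(Z,z₀)`. -/
def nuZpt (n d : ℕ) (Z : Set (En n)) (z₀ : En n) : ℝ :=
  sInf (nuCurve n d '' {ω | InOmega n d Z z₀ ω})

/-- `d`-thickness `ν_d(Z)`. -/
def nuZ (n d : ℕ) (Z : Set (En n)) : ℝ :=
  ⨆ z₀ : Metric.sphere (0 : En n) 1, nuZpt n d Z (z₀ : En n)

/-- Sup of `|P|` over a set `S`. -/
def polySup (n : ℕ) (P : MvPolynomial (Fin n) ℝ) (S : Set (En n)) : ℝ :=
  ⨆ x : S, |MvPolynomial.eval (fun i => (x : En n) i) P|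

/-- The Remez constant `R_d(Z)` (value in `[1,∞]`). -/
def Remez (n d : ℕ) (Z : Set (En n)) : ENNReal :=
  sInf {K : ENNReal | 1 ≤ K ∧ ∀ P : MvPolynomial (Fin n) ℝ, P.totalDegree ≤ d →
    ENNReal.ofReal (polySup n P (Metric.closedBall (0 : En n) 1)) ≤
      K * ENNReal.ofReal (polySup n P Z)}

/-- The inverse Remez constant `R̂_d(Z) = 1/R_d(Z)` (zero when `R_d(Z) = ∞`). -/
def invRemez (n d : ℕ) (Z : Set (En n)) : ℝ :=
  ((Remez n d Z)⁻¹).toReal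

/-- The closed axis-parallel grid `ε`-cube with index `α`. -/
def gridCube (n : ℕ) (ε : ℝ) (α : Fin n → ℤ) : Set (En n) :=
  {x | ∀ i, (α i : ℝ) * ε ≤ x i ∧ x i ≤ ((α i : ℝ) + 1) * ε}

/-- The covering number `M(ε,Z)`: the number of grid `ε`-cubes meeting `Z`. -/
def covNum (n : ℕ) (ε : ℝ) (Z : Set (En n)) : ℕ :=
  Set.ncard {α : Fin n → ℤ | (gridCube n ε α ∩ Z).Nonempty}

/-- Box (entropy) dimension of `Z`. -/
def dimE (n : ℕ) (Z : Set (En n)) : ℝ :=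
  Filter.limsup (fun ε : ℝ => Real.log (covNum n ε Z) / Real.log (1 / ε))
    (nhdsWithin 0 (Set.Ioi 0))

/-- The straight line through `z₀` with direction `v`. -/
def lineThrough (n : ℕ) (z₀ v : En n) : Set (En n) :=
  {x | ∃ t : ℝ, x = z₀ + t • v}

/-- Orthogonal projection of `p` onto the line through `z₀` with unit direction `v`. -/
def projLine (n : ℕ) (z₀ v p : En n) : En n :=
  z₀ + (inner ℝ (p - z₀) v : ℝ) • v

/-- Distance from `p` to the line through `z₀` with unit direction `v`. -/
def distLine (n : ℕ) (z₀ v p : En n) : ℝ :=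
  dist p (projLine n z₀ v p)

/-- `ρ(ℓ,𝒵)`: max distance of the `d+1` points to the line. -/
def rhoLine (n d : ℕ) (z₀ v : En n) (z : Fin (d + 1) → En n) : ℝ :=
  ⨆ i, distLine n z₀ v (z i)

/-- `κ(ℓ,𝒵)`: min distance between projections of the `d+1` points onto the line. -/
def kappaLine (n d : ℕ) (z₀ v : En n) (z : Fin (d + 1) → En n) : ℝ :=
  ⨅ p : {q : Fin (d + 1) × Fin (d + 1) // q.1 ≠ q.2},
    dist (projLine n z₀ v (z (p : Fin (d + 1) × Fin (d + 1)).1))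
      (projLine n z₀ v (z (p : Fin (d + 1) × Fin (d + 1)).2))

/-- Pointwise approximate `ad`-thickness `ν̄_d(Z,z₀)`. -/
def barNuZpt (n d : ℕ) (Z : Set (En n)) (z₀ : En n) : ℝ :=
  sInf {m : ℝ | ∃ v : En n, ‖v‖ = 1 ∧
    (lineThrough n z₀ v ∩ Metric.closedBall (0 : En n) (1 / 3)).Nonempty ∧
    ∃ z : Fin (d + 1) → En n, Function.Injective z ∧ (∀ i, z i ∈ Z) ∧
      m = rhoLine n d z₀ v z / (kappaLine n d z₀ v z) ^ d}

/-- Approximate `ad`-thickness `ν̄_d(Z)`. -/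
def barNuZ (n d : ℕ) (Z : Set (En n)) : ℝ :=
  ⨆ z₀ : Metric.sphere (0 : En n) 1, barNuZpt n d Z (z₀ : En n)

/-- The axis-parallel cube with corner `a` and side `s`. -/
def cube (n : ℕ) (a : En n) (s : ℝ) : Set (En n) :=
  {x | ∀ i, a i ≤ x i ∧ x i ≤ a i + s}

/-- `Z` is `h`-dense in the cube with corner `a` and side `s`. -/
def hDense (n : ℕ) (a : En n) (s h : ℝ) (Z : Set (En n)) : Prop :=
  ∀ b : En n, (∀ i, a i ≤ b i ∧ b i + h ≤ a i + s) → (Z ∩ cube n b h).Nonempty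

/-- `μ_d(f,z)`: max over `1 ≤ k ≤ d` of the order-`k` partial derivatives of `f` at `z`. -/
def muF (n d : ℕ) (f : En n → ℝ) (z : En n) : ℝ :=
  ⨆ k : {k : ℕ // 1 ≤ k ∧ k ≤ d}, partialMax n (k : ℕ) f z

/-- `μ_d(f)`: max over the unit ball of `μ_d(f,z)`. -/
def muFglob (n d : ℕ) (f : En n → ℝ) : ℝ :=
  ⨆ z : Metric.closedBall (0 : En n) 1, muF n d f (z : En n)

/-- `M_m(g)` for a function of one variable on `[-1,1]`. -/
def MIcc (m : ℕ) (g : ℝ → ℝ) : ℝ :=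
  ⨆ t : Set.Icc (-1 : ℝ) 1, |iteratedDeriv m g (t : ℝ)|

end
/-- `M_l(f)` for `f` on `B^1 = [-1,1]`. -/
noncomputable def Ml1 (l : ℕ) (f : ℝ → ℝ) : ℝ :=
  ⨆ x : Set.Icc (-1 : ℝ) 1, |iteratedDeriv l f (x : ℝ)|

/-- `U_d(Z)` for `Z ⊆ B̂^1`. -/
def Ud1 (d : ℕ) (Z : Set ℝ) : Set (ℝ → ℝ) :=
  {f | ContDiff ℝ (d + 1 : ℕ) f ∧ (∀ z ∈ Z, f z = 0) ∧ Ml1 0 f = 1}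

/-- `d`-rigidity in dimension one. -/
noncomputable def RG1 (d : ℕ) (Z : Set ℝ) : ℝ :=
  sInf (Ml1 (d + 1) '' Ud1 d Z)


open Polynomial in
lemma poly_contDiff (p : ℝ[X]) {n : WithTop ℕ∞} : ContDiff ℝ n fun x : ℝ => p.eval x := by
  induction p using Polynomial.induction_on' with
  | add p q hp hq => simpa [Polynomial.eval_add] using hp.add hq
  | monomial k a =>
      simpa [Polynomial.eval_monomial] using
        (contDiff_const.mul (contDiff_id.pow k) : ContDiff ℝ n fun x : ℝ => a * x ^ k)

lemma iteratedDeriv_eval (p : Polynomial ℝ) (n : ℕ) (x : ℝ) :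
    iteratedDeriv n (fun t : ℝ => p.eval t) x = (Polynomial.derivative^[n] p).eval x := by
  induction n generalizing p with
  | zero => simp
  | succ n ih =>
      rw [iteratedDeriv_succ']
      have h : deriv (fun t : ℝ => p.eval t) = fun t : ℝ => (Polynomial.derivative p).eval t :=
        funext fun t => p.deriv
      rw [h, ih, Function.iterate_succ_apply]

lemma derivative_iterate_of_natDegree_le (n : ℕ) :
    ∀ p : Polynomial ℝ, p.natDegree ≤ n →
      Polynomial.derivative^[n] p = Polynomial.C ((n.factorial : ℝ) * p.coeff n) := by
  induction n with
  | zero =>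
      intro p hp
      simp only [Function.iterate_zero_apply, Nat.factorial_zero, Nat.cast_one, one_mul]
      exact Polynomial.eq_C_of_natDegree_le_zero hp
  | succ n ih =>
      intro p hp
      rw [Function.iterate_succ_apply, ih _ ((Polynomial.natDegree_derivative_le p).trans (by omega))]
      rw [Polynomial.coeff_derivative]
      congr 1
      push_cast [Nat.factorial_succ]
      ring

lemma my_iteratedDeriv_sub (n : ℕ) (f g : ℝ → ℝ) (hf : ContDiff ℝ (n : ℕ) f)
    (hg : ContDiff ℝ (n : ℕ) g) (x : ℝ) :
    iteratedDeriv n (fun t => f t - g t) x = iteratedDeriv n f x - iteratedDeriv n g x := by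
  simp only [← iteratedDerivWithin_univ]
  exact iteratedDerivWithin_sub (Set.mem_univ x) uniqueDiffOn_univ
    ((contDiffOn_univ.2 hf) x (Set.mem_univ x)) ((contDiffOn_univ.2 hg) x (Set.mem_univ x))

lemma my_iteratedDeriv_cmul (n : ℕ) (c : ℝ) (f : ℝ → ℝ) (hf : ContDiff ℝ (n : ℕ) f) (x : ℝ) :
    iteratedDeriv n (fun t => c * f t) x = c * iteratedDeriv n f x := by
  simp only [← iteratedDerivWithin_univ]
  exact iteratedDerivWithin_const_mul (Set.mem_univ x) uniqueDiffOn_univ c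
    ((contDiffOn_univ.2 hf) x (Set.mem_univ x))

lemma rolle_iter : ∀ (n : ℕ) (g : ℝ → ℝ), ContDiff ℝ (n : ℕ) g →
    ∀ t : Fin (n + 1) → ℝ, StrictMono t → (∀ i, g (t i) = 0) →
    ∃ ξ ∈ Set.Icc (t 0) (t (Fin.last n)), iteratedDeriv n g ξ = 0 := by
  intro n
  induction n with
  | zero =>
      intro g _ t _ ht0
      exact ⟨t 0, ⟨le_refl _, le_refl _⟩, by simpa using ht0 0⟩
  | succ n ih =>
      intro g hg t hmono hzero
      have hdiff : Differentiable ℝ g :=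
        hg.differentiable (by simp)
      have hstep : ∀ i : Fin (n + 1), ∃ ξ ∈ Set.Ioo (t i.castSucc) (t i.succ), deriv g ξ = 0 := by
        intro i
        exact exists_deriv_eq_zero (hmono (Fin.castSucc_lt_succ (i := i)))
          (hdiff.continuous.continuousOn) (by rw [hzero, hzero])
      choose ξ hξI hξ0 using hstep
      have hξmono : StrictMono ξ := by
        rw [Fin.strictMono_iff_lt_succ]
        intro i
        calc ξ i.castSucc < t i.castSucc.succ := (hξI i.castSucc).2
          _ = t i.succ.castSucc := by rw [Fin.succ_castSucc]
          _ < ξ i.succ := (hξI i.succ).1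
      have hderiv : ContDiff ℝ (n : ℕ) (deriv g) := by
        have h2 : ContDiff ℝ ((n : WithTop ℕ∞) + 1) g := by exact_mod_cast hg
        exact (contDiff_succ_iff_deriv.1 h2).2.2
      obtain ⟨c, hc, hc0⟩ := ih (deriv g) hderiv ξ hξmono hξ0
      refine ⟨c, ⟨?_, ?_⟩, ?_⟩
      · exact le_trans (le_of_lt (by simpa [Fin.castSucc_zero] using (hξI 0).1)) hc.1
      · refine le_trans hc.2 (le_of_lt ?_)
        have := (hξI (Fin.last n)).2
        rwa [Fin.succ_last] at this
      · rw [iteratedDeriv_succ']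
        exact hc0

instance : Nonempty (Set.Icc (-1 : ℝ) 1) := ⟨⟨0, by norm_num⟩⟩

lemma Ml1_nonneg (l : ℕ) (f : ℝ → ℝ) : 0 ≤ Ml1 l f :=
  Real.iSup_nonneg fun _ => abs_nonneg _

lemma abs_le_Ml1 {l : ℕ} {f : ℝ → ℝ} (hf : ContDiff ℝ (l : ℕ) f) {x : ℝ}
    (hx : x ∈ Set.Icc (-1 : ℝ) 1) : |iteratedDeriv l f x| ≤ Ml1 l f := by
  have hcont : Continuous (iteratedDeriv l f) := hf.continuous_iteratedDeriv l le_rfl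
  obtain ⟨C, hC⟩ := (isCompact_Icc (a := (-1:ℝ)) (b := 1)).exists_bound_of_continuousOn
    hcont.continuousOn
  have hbdd : BddAbove (Set.range fun y : Set.Icc (-1:ℝ) 1 => |iteratedDeriv l f (y : ℝ)|) := by
    refine ⟨C, ?_⟩
    rintro _ ⟨y, rfl⟩
    simpa [Real.norm_eq_abs] using hC y y.2
  exact le_ciSup hbdd (⟨x, hx⟩ : Set.Icc (-1:ℝ) 1)

lemma Ml1_le {l : ℕ} {f : ℝ → ℝ} {c : ℝ}
    (h : ∀ x ∈ Set.Icc (-1:ℝ) 1, |iteratedDeriv l f x| ≤ c) : Ml1 l f ≤ c :=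
  ciSup_le fun y => h y y.2

open Polynomial in
lemma key (d : ℕ) (f : ℝ → ℝ) (hf : ContDiff ℝ ((d + 1 : ℕ) : ℕ) f)
    (z : Fin (d + 1) → ℝ) (hinj : Function.Injective z)
    (hz : ∀ i, z i ∈ Set.Icc (-(1/3) : ℝ) (1/3)) (hfz : ∀ i, f (z i) = 0)
    {x : ℝ} (hx : x ∈ Set.Icc (-1 : ℝ) 1) :
    |f x| * (d + 1).factorial ≤ Ml1 (d + 1) f * 2 ^ (d + 1) := by
  have hz1 : ∀ i, z i ∈ Set.Icc (-1 : ℝ) 1 := fun i =>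
    ⟨by linarith [(hz i).1], by linarith [(hz i).2]⟩
  by_cases hxz : ∃ i, x = z i
  · obtain ⟨i, rfl⟩ := hxz
    rw [hfz i, abs_zero, zero_mul]
    exact mul_nonneg (Ml1_nonneg _ _) (by positivity)
  push_neg at hxz
  set P : Polynomial ℝ := ∏ i : Fin (d + 1), (X - C (z i)) with hP
  have hPeval : ∀ t : ℝ, P.eval t = ∏ i : Fin (d + 1), (t - z i) := by
    intro t; simp [hP, Polynomial.eval_prod]
  have hPx : P.eval x ≠ 0 := by
    rw [hPeval]
    exact Finset.prod_ne_zero_iff.2 fun i _ => sub_ne_zero.2 (hxz i)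
  have hPmonic : P.Monic := monic_prod_of_monic _ _ fun i _ => monic_X_sub_C (z i)
  have hPdeg : P.natDegree = d + 1 := by
    rw [hP, natDegree_prod _ _ (fun i _ => X_sub_C_ne_zero (z i))]
    simp
  set lam : ℝ := f x / P.eval x with hlam
  set g : ℝ → ℝ := fun t => f t - lam * P.eval t with hg
  have hgC : ContDiff ℝ ((d + 1 : ℕ) : ℕ) g :=
    hf.sub (contDiff_const.mul (poly_contDiff P))
  have hximg : x ∉ Finset.image z Finset.univ := by
    simp only [Finset.mem_image, Finset.mem_univ, true_and]
    exact fun ⟨i, hi⟩ => hxz i hi.symm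
  set S : Finset ℝ := insert x (Finset.image z Finset.univ) with hS
  have hcard : S.card = d + 2 := by
    rw [hS, Finset.card_insert_of_notMem hximg,
      Finset.card_image_of_injective _ hinj]
    simp
  set t : Fin (d + 2) → ℝ := fun i => S.orderEmbOfFin hcard i with ht
  have htmono : StrictMono t := (S.orderEmbOfFin hcard).strictMono
  have htmem : ∀ i, t i ∈ S := fun i => Finset.orderEmbOfFin_mem S hcard i
  have hSmem : ∀ y ∈ S, y ∈ Set.Icc (-1 : ℝ) 1 := by
    intro y hy
    rw [hS, Finset.mem_insert] at hy
    rcases hy with rfl | hy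
    · exact hx
    · obtain ⟨i, _, rfl⟩ := Finset.mem_image.1 hy
      exact hz1 i
  have hgzero : ∀ i, g (t i) = 0 := by
    intro i
    have := htmem i
    rw [hS, Finset.mem_insert] at this
    rcases this with h | h
    · rw [hg]; simp only [h]
      rw [hlam, div_mul_cancel₀ _ hPx, sub_self]
    · obtain ⟨j, _, hj⟩ := Finset.mem_image.1 h
      rw [hg]; simp only [← hj]
      rw [hfz j, hPeval]
      rw [Finset.prod_eq_zero (Finset.mem_univ j) (by ring)]
      ring
  obtain ⟨ξ, hξmem, hξ0⟩ := rolle_iter (d + 1) g hgC t htmono hgzero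
  have hξIcc : ξ ∈ Set.Icc (-1 : ℝ) 1 := by
    have h0 := hSmem _ (htmem 0)
    have h1 := hSmem _ (htmem (Fin.last (d + 1)))
    exact ⟨le_trans h0.1 hξmem.1, le_trans hξmem.2 h1.2⟩
  have hPd : iteratedDeriv (d + 1) (fun t : ℝ => P.eval t) ξ = ((d + 1).factorial : ℝ) := by
    rw [iteratedDeriv_eval, derivative_iterate_of_natDegree_le (d + 1) P hPdeg.le]
    have : P.coeff (d + 1) = 1 := by
      have := hPmonic.leadingCoeff
      rwa [Polynomial.leadingCoeff, hPdeg] at this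
    simp [this]
  have hfd : iteratedDeriv (d + 1) f ξ = lam * (d + 1).factorial := by
    have hsub := my_iteratedDeriv_sub (d + 1) f (fun t => lam * P.eval t) hf
      (contDiff_const.mul (poly_contDiff P)) ξ
    have hcm := my_iteratedDeriv_cmul (d + 1) lam (fun t : ℝ => P.eval t) (poly_contDiff P) ξ
    have : iteratedDeriv (d + 1) g ξ =
        iteratedDeriv (d + 1) f ξ - lam * ((d + 1).factorial : ℝ) := by
      rw [hg, hsub, hcm, hPd]
    rw [hξ0] at this
    linarith
  have hfx : |f x| = |iteratedDeriv (d + 1) f ξ| * |P.eval x| / (d + 1).factorial := by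
    rw [hfd, abs_mul, hlam, abs_div]
    have hfac : |((d + 1).factorial : ℝ)| = ((d + 1).factorial : ℝ) := abs_of_pos (by positivity)
    rw [hfac]
    field_simp
  have hprod : |P.eval x| ≤ 2 ^ (d + 1) := by
    rw [hPeval, Finset.abs_prod]
    calc (∏ i : Fin (d + 1), |x - z i|) ≤ ∏ _i : Fin (d + 1), (2 : ℝ) := by
          refine Finset.prod_le_prod (fun i _ => abs_nonneg _) (fun i _ => ?_)
          have h1 := hx.1; have h2 := hx.2
          have h3 := (hz i).1; have h4 := (hz i).2
          rw [abs_le]; constructor <;> linarith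
      _ = 2 ^ (d + 1) := by simp
  have hM : |iteratedDeriv (d + 1) f ξ| ≤ Ml1 (d + 1) f := abs_le_Ml1 hf hξIcc
  rw [hfx]
  rw [div_mul_cancel₀ _ (by positivity : ((d + 1).factorial : ℝ) ≠ 0)]
  exact mul_le_mul hM hprod (abs_nonneg _) (Ml1_nonneg _ _)

open Polynomial in
/-- for closed `Z ⊆ [-1/3,1/3]`: if `Z` has at least `d+1` points then
`RG_d(Z) ≥ (d+1)!/2^{d+1}`; if `Z` has at most `d` points then `RG_d(Z) = 0`. -/
theorem stmt2 (d : ℕ) (hd : 1 ≤ d) (Z : Set ℝ) (hZc : IsClosed Z)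
    (hZ : Z ⊆ Set.Icc (-(1 / 3) : ℝ) (1 / 3)) :
    ((∃ S : Finset ℝ, (S : Set ℝ) ⊆ Z ∧ S.card = d + 1) →
      (Nat.factorial (d + 1) : ℝ) / 2 ^ (d + 1) ≤ RG1 d Z) ∧
    (Z.Finite → Z.ncard ≤ d → RG1 d Z = 0) := by
  constructor
  · rintro ⟨S, hSZ, hScard⟩
    set z : Fin (d + 1) → ℝ := fun i => S.orderEmbOfFin hScard i with hzdef
    have hinj : Function.Injective z := (S.orderEmbOfFin hScard).injective
    have hzZ : ∀ i, z i ∈ Z := fun i => hSZ (Finset.orderEmbOfFin_mem S hScard i)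
    have hzI : ∀ i, z i ∈ Set.Icc (-(1/3) : ℝ) (1/3) := fun i => hZ (hzZ i)
    -- a witness that Ud1 is nonempty
    set f₀ : ℝ → ℝ := fun x => Real.smoothTransition (2 * x - 1) with hf₀def
    have hf₀C : ContDiff ℝ (d + 1 : ℕ) f₀ := by
      have h1 : ContDiff ℝ (d + 1 : ℕ) fun x : ℝ => 2 * x - 1 :=
        (contDiff_const.mul contDiff_id).sub contDiff_const
      exact ((Real.smoothTransition.contDiff (n := ⊤)).of_le (by exact_mod_cast le_top)).comp h1
    have hf₀mem : f₀ ∈ Ud1 d Z := by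
      refine ⟨hf₀C, ?_, ?_⟩
      · intro y hy
        have hy3 := (hZ hy).2
        exact Real.smoothTransition.zero_of_nonpos (by linarith)
      · refine le_antisymm (Ml1_le fun x hx => ?_) ?_
        · rw [iteratedDeriv_zero]
          rw [abs_of_nonneg (Real.smoothTransition.nonneg _)]
          exact Real.smoothTransition.le_one _
        · have h1 : |iteratedDeriv 0 f₀ 1| = 1 := by
            rw [iteratedDeriv_zero, hf₀def]
            norm_num [Real.smoothTransition.one]
          calc (1:ℝ) = |iteratedDeriv 0 f₀ 1| := h1.symm
            _ ≤ Ml1 0 f₀ := abs_le_Ml1 (hf₀C.of_le (by exact_mod_cast Nat.zero_le _))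
                (by norm_num)
    have hne : (Ml1 (d + 1) '' Ud1 d Z).Nonempty := ⟨_, f₀, hf₀mem, rfl⟩
    apply le_csInf hne
    rintro b ⟨f, ⟨hfC, hfZ0, hfM⟩, rfl⟩
    have hfz : ∀ i, f (z i) = 0 := fun i => hfZ0 _ (hzZ i)
    have hfacpos : (0:ℝ) < (d + 1).factorial := by positivity
    have h2pos : (0:ℝ) < 2 ^ (d + 1) := by positivity
    rw [div_le_iff₀ h2pos]
    have hsup : Ml1 0 f * (d + 1).factorial ≤ Ml1 (d + 1) f * 2 ^ (d + 1) := by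
      have : Ml1 0 f ≤ Ml1 (d + 1) f * 2 ^ (d + 1) / (d + 1).factorial := by
        apply Ml1_le
        intro x hx
        rw [iteratedDeriv_zero, le_div_iff₀ hfacpos]
        exact key d f hfC z hinj hzI hfz hx
      calc Ml1 0 f * (d + 1).factorial
          ≤ (Ml1 (d + 1) f * 2 ^ (d + 1) / (d + 1).factorial) * (d + 1).factorial :=
            mul_le_mul_of_nonneg_right this hfacpos.le
        _ = Ml1 (d + 1) f * 2 ^ (d + 1) := div_mul_cancel₀ _ hfacpos.ne'
    rw [hfM, one_mul] at hsup
    exact hsup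
  · intro hfin hcard
    set S : Finset ℝ := hfin.toFinset with hSdef
    have hScard : S.card ≤ d := by
      rwa [Set.ncard_eq_toFinset_card _ hfin] at hcard
    set P : ℝ[X] := ∏ y ∈ S, (X - C y) with hPdef
    have hPdeg : P.natDegree ≤ d := by
      rw [hPdef, natDegree_prod _ _ (fun y _ => X_sub_C_ne_zero y)]
      simpa using hScard
    have hPeval : ∀ t : ℝ, P.eval t = ∏ y ∈ S, (t - y) := by
      intro t; simp [hPdef, Polynomial.eval_prod]
    have hPcont : Continuous fun x : ℝ => |P.eval x| :=
      ((poly_contDiff P (n := 0)).continuous).abs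
    obtain ⟨x₀, hx₀I, hx₀max⟩ := isCompact_Icc.exists_isMaxOn
      (⟨0, by norm_num⟩ : (Set.Icc (-1:ℝ) 1).Nonempty) hPcont.continuousOn
    set c : ℝ := |P.eval x₀| with hcdef
    have hone : (1:ℝ) ∈ Set.Icc (-1:ℝ) 1 := by norm_num
    have hP1 : P.eval 1 ≠ 0 := by
      rw [hPeval]
      refine Finset.prod_ne_zero_iff.2 fun y hy => sub_ne_zero.2 ?_
      have : y ∈ Z := by rwa [hSdef, Set.Finite.mem_toFinset] at hy
      have := (hZ this).2
      intro h; rw [← h] at this; linarith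
    have hcpos : 0 < c := lt_of_lt_of_le (abs_pos.2 hP1) (hx₀max hone)
    set f₀ : ℝ → ℝ := fun x => c⁻¹ * P.eval x with hf₀def
    have hf₀C : ContDiff ℝ (d + 1 : ℕ) f₀ := contDiff_const.mul (poly_contDiff P)
    have hf₀mem : f₀ ∈ Ud1 d Z := by
      refine ⟨hf₀C, ?_, ?_⟩
      · intro y hy
        have hyS : y ∈ S := by rwa [hSdef, Set.Finite.mem_toFinset]
        rw [hf₀def]
        simp only [hPeval]
        rw [Finset.prod_eq_zero hyS (by ring), mul_zero]
      · refine le_antisymm (Ml1_le fun x hx => ?_) ?_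
        · rw [iteratedDeriv_zero, hf₀def, abs_mul, abs_inv, abs_of_pos hcpos]
          rw [inv_mul_le_iff₀ hcpos, mul_one]
          exact hx₀max hx
        · have h1 : |iteratedDeriv 0 f₀ x₀| = 1 := by
            rw [iteratedDeriv_zero, hf₀def, abs_mul, abs_inv, abs_of_pos hcpos, ← hcdef]
            field_simp
          calc (1:ℝ) = |iteratedDeriv 0 f₀ x₀| := h1.symm
            _ ≤ Ml1 0 f₀ := abs_le_Ml1 (hf₀C.of_le (by exact_mod_cast Nat.zero_le _)) hx₀I
    have hMl0 : Ml1 (d + 1) f₀ = 0 := by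
      refine le_antisymm (Ml1_le fun x hx => ?_) (Ml1_nonneg _ _)
      have hder : iteratedDeriv (d + 1) f₀ x = 0 := by
        have h1 : iteratedDeriv (d + 1) (fun t : ℝ => P.eval t) x = 0 := by
          rw [iteratedDeriv_eval, Polynomial.iterate_derivative_eq_zero (by omega)]
          simp
        rw [hf₀def, my_iteratedDeriv_cmul _ _ _ (poly_contDiff P) x, h1, mul_zero]
      rw [hder]; simp
    have hmem0 : (0:ℝ) ∈ Ml1 (d + 1) '' Ud1 d Z := ⟨f₀, hf₀mem, hMl0⟩
    have hlb : ∀ b ∈ Ml1 (d + 1) '' Ud1 d Z, (0:ℝ) ≤ b := by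
      rintro b ⟨f, _, rfl⟩; exact Ml1_nonneg _ _
    exact le_antisymm (csInf_le ⟨0, hlb⟩ hmem0) (le_csInf ⟨0, hmem0⟩ hlb)
end

section
/- Let n ≥ 1 and d ≥ 1 be integers. There exist constants C_1 = C_1(n,d) > 0 and C_2 = C_2(n,d) > 0, depending only on n and d, with the following property: for every C^{d+1} function f on B^n and every C^{d+1} curve ω : [-1,1] → B^n satisfying 0 < ‖dω(t)‖ ≤ 1 for all t ∈ [-1,1] and ν_d(ω) ≤ 1, setting g(t) = f(ω(t)), for each t ∈ [-1,1] one has ‖d^{d+1} f(ω(t))‖ ≥ (C_1 / ‖ω'(t)‖^{d+1}) · ( |g^{(d+1)}(t)| − C_2 · μ_d(f, ω(t)) · ν_d(ω, t) ). -/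
open scoped RealInnerProductSpace
section Aux

open Finset in
instance fintypeSubIcc (a b : ℕ) : Fintype {k : ℕ // a ≤ k ∧ k ≤ b} :=
  Fintype.subtype (Finset.Icc a b) (fun k => by simp [Finset.mem_Icc])

lemma le_iSup_fin {ι : Type*} [Finite ι] (g : ι → ℝ) (i : ι) : g i ≤ ⨆ j, g j :=
  le_ciSup (Set.Finite.bddAbove (Set.finite_range g)) i

lemma coord_abs_le_norm {n : ℕ} (x : En n) (i : Fin n) : |x i| ≤ ‖x‖ := by
  calc |x i| = Real.sqrt (|x i| ^ 2) := (Real.sqrt_sq (abs_nonneg _)).symm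
    _ ≤ Real.sqrt (∑ j, ‖x j‖ ^ 2) := by
        apply Real.sqrt_le_sqrt
        have : |x i| ^ 2 = ‖x i‖ ^ 2 := by rw [Real.norm_eq_abs]
        rw [this]
        exact Finset.single_le_sum (f := fun j => ‖x j‖ ^ 2)
          (fun j _ => sq_nonneg _) (Finset.mem_univ i)
    _ = ‖x‖ := (EuclideanSpace.norm_eq x).symm

lemma euclid_decomp {n : ℕ} (x : En n) :
    x = ∑ j : Fin n, x j • EuclideanSpace.single j (1 : ℝ) := by
  ext i
  rw [show (∑ j : Fin n, x j • EuclideanSpace.single j (1 : ℝ)) i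
      = ∑ j : Fin n, (x j • EuclideanSpace.single j (1 : ℝ)) i from by simp only [WithLp.ofLp_sum, Finset.sum_apply]]
  simp [EuclideanSpace.single_apply]

lemma partialMax_nonneg (n l : ℕ) (f : En n → ℝ) (z : En n) : 0 ≤ partialMax n l f z :=
  Real.iSup_nonneg fun _ => abs_nonneg _

lemma curveDer_nonneg (n k : ℕ) (ω : ℝ → En n) (t : ℝ) : 0 ≤ curveDer n k ω t :=
  Real.iSup_nonneg fun _ => abs_nonneg _

lemma nuAt_nonneg (n d : ℕ) (ω : ℝ → En n) (t : ℝ) : 0 ≤ nuAt n d ω t :=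
  Real.iSup_nonneg fun _ => curveDer_nonneg _ _ _ _

lemma muF_nonneg (n d : ℕ) (f : En n → ℝ) (z : En n) : 0 ≤ muF n d f z :=
  Real.iSup_nonneg fun _ => partialMax_nonneg _ _ _ _

lemma le_partialMax (n l : ℕ) (f : En n → ℝ) (z : En n) (α : Fin l → Fin n) :
    |iteratedFDeriv ℝ l f z (fun j => EuclideanSpace.single (α j) (1 : ℝ))|
      ≤ partialMax n l f z := by
  unfold partialMax
  exact le_iSup_fin
    (fun β : Fin l → Fin n => |iteratedFDeriv ℝ l f z fun j => EuclideanSpace.single (β j) (1:ℝ)|) α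

lemma le_curveDer (n k : ℕ) (ω : ℝ → En n) (t : ℝ) (i : Fin n) :
    |iteratedDeriv k ω t i| ≤ curveDer n k ω t := by
  unfold curveDer
  exact le_iSup_fin (fun j : Fin n => |iteratedDeriv k ω t j|) i

lemma le_nuAt (n d k : ℕ) (ω : ℝ → En n) (t : ℝ) (h2 : 2 ≤ k) (hk : k ≤ d + 1) :
    curveDer n k ω t ≤ nuAt n d ω t :=
  le_iSup_fin (fun k : {k : ℕ // 2 ≤ k ∧ k ≤ d + 1} => curveDer n (k : ℕ) ω t) ⟨k, h2, hk⟩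

lemma le_muF (n d k : ℕ) (f : En n → ℝ) (z : En n) (h1 : 1 ≤ k) (hk : k ≤ d) :
    partialMax n k f z ≤ muF n d f z :=
  le_iSup_fin (fun k : {k : ℕ // 1 ≤ k ∧ k ≤ d} => partialMax n (k : ℕ) f z) ⟨k, h1, hk⟩

lemma nuAt_le_nuCurve (n d : ℕ) (ω : ℝ → En n) (hω : ContDiff ℝ (d + 1 : ℕ) ω) {t : ℝ}
    (ht : t ∈ Set.Icc (-1 : ℝ) 1) : nuAt n d ω t ≤ nuCurve n d ω := by
  have hbd : ∀ k : Fin (d + 2), ∃ C, ∀ s ∈ Set.Icc (-1 : ℝ) 1,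
      ‖iteratedDeriv (k : ℕ) ω s‖ ≤ C := by
    intro k
    have hc : Continuous (iteratedDeriv (k : ℕ) ω) :=
      hω.continuous_iteratedDeriv _ (by exact_mod_cast Nat.lt_succ_iff.mp k.isLt)
    obtain ⟨C, hC⟩ := (isCompact_Icc (a := (-1:ℝ)) (b := 1)).exists_bound_of_continuousOn
      hc.continuousOn
    exact ⟨C, hC⟩
  choose C0 hC0 using hbd
  set C : ℝ := ∑ k : Fin (d + 2), max (C0 k) 0 with hCdef
  have hC0' : (0 : ℝ) ≤ C := Finset.sum_nonneg fun j _ => le_max_right _ _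
  have hCk : ∀ k : Fin (d + 2), C0 k ≤ C := fun k =>
    le_trans (le_max_left _ _)
      (Finset.single_le_sum (f := fun k : Fin (d+2) => max (C0 k) 0)
        (fun j _ => le_max_right _ _) (Finset.mem_univ k))
  have key : ∀ s ∈ Set.Icc (-1 : ℝ) 1, nuAt n d ω s ≤ C := by
    intro s hs
    refine Real.iSup_le (fun kk => ?_) hC0'
    obtain ⟨k, hk2, hkd⟩ := kk
    refine Real.iSup_le (fun i => ?_) hC0'
    have hlt : k < d + 2 := by omega
    calc |iteratedDeriv k ω s i| ≤ ‖iteratedDeriv k ω s‖ := coord_abs_le_norm _ i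
      _ ≤ C0 ⟨k, hlt⟩ := hC0 ⟨k, hlt⟩ s hs
      _ ≤ C := hCk _
  have hbdd : BddAbove (Set.range fun s : Set.Icc (-1:ℝ) 1 => nuAt n d ω (s : ℝ)) := by
    refine ⟨C, ?_⟩
    rintro y ⟨s, rfl⟩
    exact key s s.2
  exact le_ciSup hbdd (⟨t, ht⟩ : Set.Icc (-1:ℝ) 1)

lemma iteratedFDeriv_apply_bound (n k : ℕ) (hn : 1 ≤ n) (f : En n → ℝ) (x : En n)
    (u : Fin k → En n) (b : Fin k → ℝ) (hb : ∀ i j, |u i j| ≤ b i) :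
    |iteratedFDeriv ℝ k f x u| ≤ (n : ℝ) ^ k * partialMax n k f x * ∏ i, b i := by
  classical
  have hb0 : ∀ i, 0 ≤ b i := fun i => le_trans (abs_nonneg _) (hb i ⟨0, hn⟩)
  have hu : u = fun i => ∑ j : Fin n, u i j • EuclideanSpace.single j (1 : ℝ) :=
    funext fun i => euclid_decomp (u i)
  have expand : iteratedFDeriv ℝ k f x u
      = ∑ r : Fin k → Fin n, (∏ i, u i (r i)) •
          iteratedFDeriv ℝ k f x (fun i => EuclideanSpace.single (r i) (1 : ℝ)) := by
    conv_lhs => rw [hu]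
    rw [ContinuousMultilinearMap.map_sum]
    exact Finset.sum_congr rfl fun r _ => ContinuousMultilinearMap.map_smul_univ _ _ _
  rw [expand]
  calc |∑ r : Fin k → Fin n, (∏ i, u i (r i)) •
          iteratedFDeriv ℝ k f x (fun i => EuclideanSpace.single (r i) (1 : ℝ))|
      ≤ ∑ r : Fin k → Fin n, |(∏ i, u i (r i)) •
          iteratedFDeriv ℝ k f x (fun i => EuclideanSpace.single (r i) (1 : ℝ))| :=
        Finset.abs_sum_le_sum_abs _ _
    _ ≤ ∑ _r : Fin k → Fin n, (∏ i, b i) * partialMax n k f x := by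
        refine Finset.sum_le_sum fun r _ => ?_
        rw [smul_eq_mul, abs_mul]
        refine mul_le_mul ?_ (le_partialMax n k f x r) (abs_nonneg _)
          (Finset.prod_nonneg fun i _ => hb0 i)
        rw [Finset.abs_prod]
        exact Finset.prod_le_prod (fun i _ => abs_nonneg _) (fun i _ => hb i (r i))
    _ = (n : ℝ) ^ k * partialMax n k f x * ∏ i, b i := by
        rw [Finset.sum_const, Finset.card_univ, Fintype.card_fun, Fintype.card_fin,
          Fintype.card_fin, nsmul_eq_mul]
        push_cast
        ring

lemma sum_partSize {m : ℕ} (c : OrderedFinpartition m) : ∑ i, c.partSize i = m := by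
  classical
  have := Fintype.card_congr c.equivSigma
  simpa [Fintype.card_sigma] using this

lemma one_le_length {m : ℕ} (c : OrderedFinpartition m) (hm : 1 ≤ m) : 1 ≤ c.length := by
  by_contra h
  have h0 : c.length = 0 := by omega
  have hie : IsEmpty (Fin c.length) := by rw [h0]; infer_instance
  have := sum_partSize c
  rw [Finset.univ_eq_empty, Finset.sum_empty] at this
  omega

lemma all_one_of_length_eq {m : ℕ} (c : OrderedFinpartition m) (h : c.length = m) :
    ∀ i, c.partSize i = 1 := by
  intro i
  by_contra hne
  have h2 : 2 ≤ c.partSize i := by have := c.partSize_pos i; omega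
  have hlt : ∑ _j : Fin c.length, 1 < ∑ j, c.partSize j :=
    Finset.sum_lt_sum (fun j _ => c.partSize_pos j) ⟨i, Finset.mem_univ i, by omega⟩
  rw [sum_partSize c] at hlt
  simp only [Finset.sum_const, Finset.card_univ, Fintype.card_fin, smul_eq_mul, mul_one] at hlt
  omega

lemma exists_two_le_of_length_lt {m : ℕ} (c : OrderedFinpartition m) (h : c.length < m) :
    ∃ i, 2 ≤ c.partSize i := by
  by_contra hno
  push_neg at hno
  have : ∑ i, c.partSize i ≤ ∑ _i : Fin c.length, 1 :=
    Finset.sum_le_sum fun i _ => by have h1 := c.partSize_pos i; have := hno i; omega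
  rw [sum_partSize c] at this
  simp only [Finset.sum_const, Finset.card_univ, Fintype.card_fin, smul_eq_mul, mul_one] at this
  omega

lemma faa_id (n d : ℕ) {f : En n → ℝ} (hf : ContDiff ℝ (d+1:ℕ) f) {ω : ℝ → En n}
    (hω : ContDiff ℝ (d+1:ℕ) ω) (m : ℕ) (hm : m ≤ d+1) (t : ℝ) :
    iteratedDeriv m (fun u => f (ω u)) t = ∑ c : OrderedFinpartition m,
      iteratedFDeriv ℝ c.length f (ω t) (fun i => iteratedDeriv (c.partSize i) ω t) := by
  have hq : HasFTaylorSeriesUpTo ((d+1:ℕ):ℕ∞) f (ftaylorSeries ℝ f) := by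
    rw [← contDiff_iff_ftaylorSeries]
    exact_mod_cast hf
  have hp : HasFTaylorSeriesUpTo ((d+1:ℕ):ℕ∞) ω (ftaylorSeries ℝ ω) := by
    rw [← contDiff_iff_ftaylorSeries]
    exact_mod_cast hω
  have hcomp : HasFTaylorSeriesUpToOn ((d+1:ℕ):ℕ∞) (f ∘ ω)
      (fun x => (ftaylorSeries ℝ f (ω x)).taylorComp (ftaylorSeries ℝ ω x)) Set.univ :=
    HasFTaylorSeriesUpToOn.comp (hasFTaylorSeriesUpToOn_univ_iff.mpr hq)
      (hasFTaylorSeriesUpToOn_univ_iff.mpr hp) (Set.mapsTo_univ _ _)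
  have heq : (ftaylorSeries ℝ f (ω t)).taylorComp (ftaylorSeries ℝ ω t) m
      = iteratedFDeriv ℝ m (f ∘ ω) t :=
    (hasFTaylorSeriesUpToOn_univ_iff.mp hcomp).eq_iteratedFDeriv (by exact_mod_cast hm) t
  have h1 : iteratedDeriv m (fun u => f (ω u)) t
      = iteratedFDeriv ℝ m (f ∘ ω) t (fun _ => (1:ℝ)) := by
    rw [← iteratedDeriv_eq_iteratedFDeriv]; rfl
  rw [h1, ← heq]
  rw [show ((ftaylorSeries ℝ f (ω t)).taylorComp (ftaylorSeries ℝ ω t) m)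
      = ∑ c : OrderedFinpartition m,
        (ftaylorSeries ℝ f (ω t)).compAlongOrderedFinpartition (ftaylorSeries ℝ ω t) c from rfl,
    ContinuousMultilinearMap.sum_apply]
  refine Finset.sum_congr rfl (fun c _ => ?_)
  rw [FormalMultilinearSeries.compAlongOrderedFinpartition_apply]
  congr 1

end Aux

/-- there are `C₁(n,d), C₂(n,d) > 0` such that for every `C^{d+1}` function `f`
on `B^n` and admissible curve `ω`, for each `t ∈ [-1,1]`,
`‖d^{d+1}f(ω(t))‖ ≥ (C₁/‖ω'(t)‖^{d+1})·(|g^{(d+1)}(t)| − C₂·μ_d(f,ω(t))·ν_d(ω,t))`. -/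
theorem stmt8 (n d : ℕ) (hn : 1 ≤ n) (hd : 1 ≤ d) :
    ∃ C₁ C₂ : ℝ, 0 < C₁ ∧ 0 < C₂ ∧
      ∀ f : En n → ℝ, ContDiff ℝ (d + 1 : ℕ) f →
        ∀ ω : ℝ → En n, ContDiff ℝ (d + 1 : ℕ) ω →
          (∀ t ∈ Set.Icc (-1 : ℝ) 1, ω t ∈ Metric.closedBall (0 : En n) 1) →
          (∀ t ∈ Set.Icc (-1 : ℝ) 1, 0 < curveDer n 1 ω t ∧ curveDer n 1 ω t ≤ 1) →
          nuCurve n d ω ≤ 1 →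
          ∀ t ∈ Set.Icc (-1 : ℝ) 1,
            partialMax n (d + 1) f (ω t) ≥
              C₁ / (curveDer n 1 ω t) ^ (d + 1) *
                (|iteratedDeriv (d + 1) (fun u => f (ω u)) t| -
                  C₂ * muF n d f (ω t) * nuAt n d ω t) := by
  classical
  haveI : Nonempty (Fin n) := ⟨⟨0, hn⟩⟩
  set N : ℕ := Fintype.card (OrderedFinpartition (d + 1)) with hNdef
  have hNpos : 0 < N := Fintype.card_pos
  have hnpos : (0 : ℝ) < (n : ℝ) := by exact_mod_cast hn
  have hn1 : (1 : ℝ) ≤ (n : ℝ) := by exact_mod_cast hn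
  refine ⟨1 / ((N : ℝ) * (n : ℝ) ^ (d + 1)), (N : ℝ) * (n : ℝ) ^ d, by positivity, by positivity,
    ?_⟩
  intro f hf ω hω hball hder hnu t ht
  obtain ⟨hw0, hw1⟩ := hder t ht
  set w := curveDer n 1 ω t with hwdef
  set pM := partialMax n (d + 1) f (ω t) with hpMdef
  set μ := muF n d f (ω t) with hμdef
  set ν := nuAt n d ω t with hνdef
  have hν0 : 0 ≤ ν := nuAt_nonneg n d ω t
  have hμ0 : 0 ≤ μ := muF_nonneg n d f (ω t)
  have hpM0 : 0 ≤ pM := partialMax_nonneg n (d + 1) f (ω t)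
  have hν1 : ν ≤ 1 := (nuAt_le_nuCurve n d ω hω ht).trans hnu
  have hgid := faa_id n d hf hω (d + 1) le_rfl t
  have hterm : ∀ c : OrderedFinpartition (d + 1),
      |iteratedFDeriv ℝ c.length f (ω t) (fun i => iteratedDeriv (c.partSize i) ω t)|
        ≤ (n : ℝ) ^ (d + 1) * pM * w ^ (d + 1) + (n : ℝ) ^ d * μ * ν := by
    intro c
    have hbase := iteratedFDeriv_apply_bound n c.length hn f (ω t)
      (fun i => iteratedDeriv (c.partSize i) ω t)
      (fun i => curveDer n (c.partSize i) ω t)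
      (fun i j => le_curveDer n (c.partSize i) ω t j)
    rcases eq_or_lt_of_le c.length_le with hlen | hlen
    · -- c.length = d + 1 : all parts singletons
      have hone := all_one_of_length_eq c hlen
      have hprod : (∏ i, curveDer n (c.partSize i) ω t) = w ^ (d + 1) := by
        rw [Finset.prod_congr rfl (fun i _ => by rw [hone i])]
        rw [Finset.prod_const, Finset.card_univ, Fintype.card_fin, hlen]
      have h1 : ((n : ℝ)) ^ c.length = (n : ℝ) ^ (d + 1) := by rw [hlen]
      have h2 : partialMax n c.length f (ω t) = pM := by rw [hlen]
      have hmain : |iteratedFDeriv ℝ c.length f (ω t)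
          (fun i => iteratedDeriv (c.partSize i) ω t)|
          ≤ (n : ℝ) ^ (d + 1) * pM * w ^ (d + 1) := by
        rw [← h1, ← h2, ← hprod]; exact hbase
      refine hmain.trans (le_add_of_nonneg_right ?_)
      have := mul_nonneg (mul_nonneg (pow_nonneg hnpos.le d) hμ0) hν0
      linarith
    · -- c.length ≤ d : some part has size ≥ 2
      have hlend : c.length ≤ d := by omega
      obtain ⟨i0, hi0⟩ := exists_two_le_of_length_lt c hlen
      have hble : ∀ i, curveDer n (c.partSize i) ω t ≤ 1 := by
        intro i
        rcases Nat.lt_or_ge (c.partSize i) 2 with h | h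
        · have h1 : c.partSize i = 1 := by have := c.partSize_pos i; omega
          rw [h1]; exact hw1
        · exact ((le_nuAt n d _ ω t h (c.partSize_le i)).trans hν1)
      have hb0 : ∀ i, 0 ≤ curveDer n (c.partSize i) ω t := fun i => curveDer_nonneg _ _ _ _
      have hbν : curveDer n (c.partSize i0) ω t ≤ ν :=
        le_nuAt n d _ ω t hi0 (c.partSize_le i0)
      have hprod : (∏ i, curveDer n (c.partSize i) ω t) ≤ ν := by
        have hsplit := Finset.mul_prod_erase Finset.univ
          (fun i => curveDer n (c.partSize i) ω t) (Finset.mem_univ i0)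
        rw [← hsplit]
        calc curveDer n (c.partSize i0) ω t * ∏ i ∈ Finset.univ.erase i0,
              curveDer n (c.partSize i) ω t
            ≤ ν * 1 := mul_le_mul hbν
              (Finset.prod_le_one (fun i _ => hb0 i) (fun i _ => hble i))
              (Finset.prod_nonneg fun i _ => hb0 i) hν0
          _ = ν := mul_one ν
      have hpm : partialMax n c.length f (ω t) ≤ μ :=
        le_muF n d c.length f (ω t) (one_le_length c (by omega)) hlend
      have hnle : ((n : ℝ)) ^ c.length ≤ (n : ℝ) ^ d := pow_le_pow_right₀ hn1 hlend
      have hmain : |iteratedFDeriv ℝ c.length f (ω t)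
          (fun i => iteratedDeriv (c.partSize i) ω t)| ≤ (n : ℝ) ^ d * μ * ν := by
        refine hbase.trans ?_
        refine mul_le_mul (mul_le_mul hnle hpm (partialMax_nonneg _ _ _ _)
          (pow_nonneg hnpos.le d)) hprod (Finset.prod_nonneg fun i _ => hb0 i) ?_
        exact mul_nonneg (pow_nonneg hnpos.le d) hμ0
      refine hmain.trans (le_add_of_nonneg_left ?_)
      exact mul_nonneg (mul_nonneg (pow_nonneg hnpos.le (d+1)) hpM0) (pow_nonneg hw0.le (d+1))
  have htot : |iteratedDeriv (d + 1) (fun u => f (ω u)) t|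
      ≤ (N : ℝ) * ((n : ℝ) ^ (d + 1) * pM * w ^ (d + 1)) + (N : ℝ) * ((n : ℝ) ^ d * μ * ν) := by
    rw [hgid]
    calc |∑ c : OrderedFinpartition (d + 1),
          iteratedFDeriv ℝ c.length f (ω t) (fun i => iteratedDeriv (c.partSize i) ω t)|
        ≤ ∑ c : OrderedFinpartition (d + 1),
          |iteratedFDeriv ℝ c.length f (ω t) (fun i => iteratedDeriv (c.partSize i) ω t)| :=
          Finset.abs_sum_le_sum_abs _ _
      _ ≤ ∑ _c : OrderedFinpartition (d + 1),
            ((n : ℝ) ^ (d + 1) * pM * w ^ (d + 1) + (n : ℝ) ^ d * μ * ν) :=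
          Finset.sum_le_sum fun c _ => hterm c
      _ = (N : ℝ) * ((n : ℝ) ^ (d + 1) * pM * w ^ (d + 1)) + (N : ℝ) * ((n : ℝ) ^ d * μ * ν) := by
          rw [Finset.sum_const, Finset.card_univ, nsmul_eq_mul]
          ring
  set G := |iteratedDeriv (d + 1) (fun u => f (ω u)) t| with hGdef
  set X := G - (N : ℝ) * (n : ℝ) ^ d * μ * ν with hXdef
  have hXle : X ≤ (N : ℝ) * (n : ℝ) ^ (d + 1) * pM * w ^ (d + 1) := by
    rw [hXdef]
    nlinarith [htot]
  have hwpow : (0 : ℝ) < w ^ (d + 1) := pow_pos hw0 (d + 1)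
  have hK : (0 : ℝ) < 1 / ((N : ℝ) * (n : ℝ) ^ (d + 1)) / w ^ (d + 1) := by positivity
  rw [ge_iff_le]
  show 1 / ((N : ℝ) * (n : ℝ) ^ (d + 1)) / w ^ (d + 1) * (G - (N : ℝ) * (n : ℝ) ^ d * μ * ν)
    ≤ pM
  rcases le_total X 0 with hX | hX
  · rw [show G - (N : ℝ) * (n : ℝ) ^ d * μ * ν = X from rfl]
    exact (mul_nonpos_of_nonneg_of_nonpos hK.le hX).trans hpM0
  · rw [show G - (N : ℝ) * (n : ℝ) ^ d * μ * ν = X from rfl]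
    have h1 : 1 / ((N : ℝ) * (n : ℝ) ^ (d + 1)) / w ^ (d + 1) * X
        ≤ 1 / ((N : ℝ) * (n : ℝ) ^ (d + 1)) / w ^ (d + 1) *
          ((N : ℝ) * (n : ℝ) ^ (d + 1) * pM * w ^ (d + 1)) :=
      mul_le_mul_of_nonneg_left hXle hK.le
    refine h1.trans (le_of_eq ?_)
    have hNne : ((N : ℝ)) ≠ 0 := by positivity
    have hnne : ((n : ℝ)) ^ (d + 1) ≠ 0 := by positivity
    have hwne : (w : ℝ) ^ (d + 1) ≠ 0 := ne_of_gt hwpow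
    field_simp
end
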